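/- A Boolean function g : {0,1}^n → {0,1} has alternation at most k if and only if there exist k monotone functions g_1, …, g_k : {0,1}^n → {0,1} such that g(x) = g(0^n) ⊕ g_1(x) ⊕ ⋯ ⊕ g_k(x) for all x. -/

import Mathlib

open Finset

section
variable {n : ℕ}

def supp (x : Fin n → Bool) : Finset (Fin n) := Finset.univ.filter (fun v => x v = true)

lemma supp_update (x : Fin n → Bool) (v : Fin n) :
    supp (Function.update x v false) = (supp x).erase v := by
  ext u
  simp only [supp, Finset.mem_filter, Finset.mem_univ, true_and, Finset.mem_erase,
    Function.update_apply]
  by_cases h : u = v <;> simp [h]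

def altF (g : (Fin n → Bool) → Bool) (x : Fin n → Bool) : ℕ :=
  (supp x).attach.sup (fun v =>
    altF g (Function.update x v.1 false) +
      (if g (Function.update x v.1 false) ≠ g x then 1 else 0))
termination_by (supp x).card
decreasing_by
  rw [supp_update]
  exact Finset.card_erase_lt_of_mem (by simpa [supp] using v.2)

end
section
variable {n : ℕ} (g : (Fin n → Bool) → Bool)

lemma altF_of_empty {x : Fin n → Bool} (h : supp x = ∅) : altF g x = 0 := by
  rw [altF, h]
  simp

lemma eq_false_of_supp_empty {x : Fin n → Bool} (h : supp x = ∅) : x = (fun _ => false) := by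
  funext v
  have : v ∉ supp x := by simp [h]
  simpa [supp] using this

lemma altF_ge {x : Fin n → Bool} {v : Fin n} (hv : v ∈ supp x) :
    altF g (Function.update x v false) +
      (if g (Function.update x v false) ≠ g x then 1 else 0) ≤ altF g x := by
  conv_rhs => rw [altF]
  exact Finset.le_sup (f := fun v : {v // v ∈ supp x} =>
    altF g (Function.update x v.1 false) +
      (if g (Function.update x v.1 false) ≠ g x then 1 else 0))
    (Finset.mem_attach _ ⟨v, hv⟩)

lemma altF_exists {x : Fin n → Bool} (h : (supp x).Nonempty) :
    ∃ v ∈ supp x, altF g x = altF g (Function.update x v false) +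
      (if g (Function.update x v false) ≠ g x then 1 else 0) := by
  obtain ⟨⟨v, hv⟩, -, hs⟩ := Finset.exists_mem_eq_sup (α := ℕ) (supp x).attach
    (by simpa using h) (fun v =>
      altF g (Function.update x v.1 false) +
        (if g (Function.update x v.1 false) ≠ g x then 1 else 0) : _ → ℕ)
  exact ⟨v, hv, by rw [altF]; exact hs⟩

lemma altF_mono : ∀ m : ℕ, ∀ x y : Fin n → Bool, (supp y).card ≤ m →
    (∀ v, x v = true → y v = true) → altF g x ≤ altF g y := by
  intro m
  induction m with
  | zero =>
    intro x y hc hxy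
    have hy : supp y = ∅ := Finset.card_eq_zero.mp (Nat.le_zero.mp hc)
    have hx : supp x = ∅ := by
      rw [Finset.eq_empty_iff_forall_notMem] at hy ⊢
      intro v hv
      simp only [supp, Finset.mem_filter, Finset.mem_univ, true_and] at hv
      exact hy v (by simp [supp, hxy v hv])
    rw [altF_of_empty g hx, altF_of_empty g hy]
  | succ m ih =>
    intro x y hc hxy
    by_cases hxy' : x = y
    · exact hxy' ▸ le_refl _
    · have : ∃ v, y v = true ∧ x v = false := by
        by_contra hcon
        push_neg at hcon
        apply hxy'
        funext v
        cases hxv : x v with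
        | true => exact (hxy v hxv).symm ▸ hxv.symm ▸ rfl
        | false =>
          cases hyv : y v with
          | true => exact absurd hxv (by simpa [hyv] using hcon v hyv)
          | false => rfl
      obtain ⟨v, hyv, hxv⟩ := this
      have hvm : v ∈ supp y := by simp [supp, hyv]
      have h1 : altF g x ≤ altF g (Function.update y v false) := by
        apply ih
        · rw [supp_update]
          have := Finset.card_erase_lt_of_mem hvm
          omega
        · intro u hu
          rcases eq_or_ne u v with rfl | huv
          · exact absurd hu (by simp [hxv])
          · simp only [Function.update_apply, if_neg huv]
            exact hxy u hu
      exact h1.trans (le_trans (Nat.le_add_right _ _) (altF_ge g hvm))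

lemma altF_parity : ∀ m : ℕ, ∀ x : Fin n → Bool, (supp x).card ≤ m →
    ((altF g x : ZMod 2) + (if g (fun _ => false) then 1 else 0) = (if g x then 1 else 0)) := by
  intro m
  induction m with
  | zero =>
    intro x hc
    have hx : supp x = ∅ := Finset.card_eq_zero.mp (Nat.le_zero.mp hc)
    rw [altF_of_empty g hx, eq_false_of_supp_empty hx]
    simp
  | succ m ih =>
    intro x hc
    rcases Finset.eq_empty_or_nonempty (supp x) with hx | hx
    · rw [altF_of_empty g hx, eq_false_of_supp_empty hx]
      simp
    · obtain ⟨v, hv, heq⟩ := altF_exists g hx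
      set x' := Function.update x v false with hx'
      have hc' : (supp x').card ≤ m := by
        rw [hx', supp_update]
        have := Finset.card_erase_lt_of_mem hv
        omega
      have IH := ih x' hc'
      rw [heq]
      push_cast
      have hδ : (if g x' ≠ g x then (1 : ZMod 2) else 0) =
          (if g x then 1 else 0) - (if g x' then 1 else 0) := by
        cases hgx : g x <;> cases hgx' : g x' <;> simp <;> decide
      rw [hδ]
      linear_combination IH

end
section
variable {n : ℕ} (g : (Fin n → Bool) → Bool)

def AA (π : Equiv.Perm (Fin n)) (j : ℕ) : ℕ :=
  ((Finset.range j).filter (fun t =>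
    g (fun v => decide ((π v : ℕ) < t)) ≠ g (fun v => decide ((π v : ℕ) < t + 1)))).card

lemma chain_base {x : Fin n → Bool} (h : supp x = ∅) :
    ∃ π : Equiv.Perm (Fin n),
      (∀ v, decide ((π v : ℕ) < (supp x).card) = x v) ∧
      altF g x ≤ AA g π (supp x).card := by
  refine ⟨1, ?_, ?_⟩
  · intro v
    rw [h, eq_false_of_supp_empty h]
    simp
  · rw [h, altF_of_empty g h]
    simp [AA]

lemma chain_exists : ∀ m : ℕ, ∀ x : Fin n → Bool, (supp x).card ≤ m →
    ∃ π : Equiv.Perm (Fin n),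
      (∀ v, decide ((π v : ℕ) < (supp x).card) = x v) ∧
      altF g x ≤ AA g π (supp x).card := by
  intro m
  induction m with
  | zero =>
    intro x hc
    exact chain_base g (Finset.card_eq_zero.mp (Nat.le_zero.mp hc))
  | succ m ih =>
    intro x hc
    rcases Finset.eq_empty_or_nonempty (supp x) with hx | hx
    · exact chain_base g hx
    · obtain ⟨v, hv, heq⟩ := altF_exists g hx
      set x' := Function.update x v false with hx'def
      set w' := (supp x').card with hw'def
      have hsx' : supp x' = (supp x).erase v := supp_update x v
      have hcard : (supp x).card = w' + 1 := by
        rw [hw'def, hsx', Finset.card_erase_of_mem hv]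
        have : 0 < (supp x).card := Finset.card_pos.mpr ⟨v, hv⟩
        omega
      have hwn : (supp x).card ≤ n := by
        have := Finset.card_le_card (Finset.subset_univ (supp x))
        simpa using this
      have hw'n : w' < n := by omega
      obtain ⟨π', hχ', hA'⟩ := ih x' (by omega)
      set w1 : Fin n := ⟨w', hw'n⟩ with hw1def
      have hπ'v : w' ≤ (π' v : ℕ) := by
        have h1 := hχ' v
        have h2 : x' v = false := by simp [hx'def]
        rw [h2, decide_eq_false_iff_not] at h1
        omega
      set π : Equiv.Perm (Fin n) := (Equiv.swap (π' v) w1) * π' with hπdef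
      have hkey : ∀ t, t ≤ w' → ∀ u, ((π u : ℕ) < t ↔ (π' u : ℕ) < t) := by
        intro t ht u
        simp only [hπdef, Equiv.Perm.mul_apply, Equiv.swap_apply_def]
        split_ifs with h1 h2
        · have h3 : (π' u : ℕ) = (π' v : ℕ) := by rw [h1]
          have h4 : (w1 : ℕ) = w' := rfl
          constructor <;> intro h5 <;> omega
        · have h3 : (π' u : ℕ) = w' := by rw [h2]
          constructor <;> intro h5 <;> omega
        · exact Iff.rfl
      have hxv : x v = true := by simpa [supp] using hv
      have hclaim2 : ∀ u, decide ((π u : ℕ) < w' + 1) = x u := by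
        intro u
        rcases eq_or_ne u v with rfl | huv
        · have : π u = w1 := by
            simp [hπdef, Equiv.swap_apply_left]
          rw [this, hxv]
          simp
          exact le_rfl
        · have hxu : x u = x' u := by simp [hx'def, Function.update_apply, huv]
          rcases eq_or_ne (π' u) w1 with h1 | h1
          · have hne : π' u ≠ π' v := fun h => huv (π'.injective h)
            have : π u = π' v := by
              simp [hπdef, h1, Equiv.swap_apply_right]
            rw [this, hxu]
            have hx'u : x' u = false := by
              rw [← hχ' u, h1]
              simp
              exact le_rfl
            rw [hx'u]
            have hne2 : (π' v : ℕ) ≠ w' := by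
              intro h
              exact hne (h1.trans (Fin.ext h).symm)
            simp only [decide_eq_false_iff_not]
            omega
          · have hne : π' u ≠ π' v := fun h => huv (π'.injective h)
            have : π u = π' u := by
              simp only [hπdef, Equiv.Perm.mul_apply]
              exact Equiv.swap_apply_of_ne_of_ne hne h1
            rw [this, hxu, ← hχ' u]
            have hne2 : (π' u : ℕ) ≠ w' := fun h => h1 (Fin.ext h)
            exact decide_eq_decide.mpr (by omega)
      have hchainw' : (fun u => decide ((π u : ℕ) < w')) = x' := by
        funext u
        exact (decide_eq_decide.mpr (hkey w' le_rfl u)).trans (hχ' u)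
      have hchainw : (fun u => decide ((π u : ℕ) < w' + 1)) = x := funext hclaim2
      have hA1 : AA g π w' = AA g π' w' := by
        unfold AA
        congr 1
        apply Finset.filter_congr
        intro t ht
        rw [Finset.mem_range] at ht
        have e1 : (fun u => decide ((π u : ℕ) < t)) = (fun u => decide ((π' u : ℕ) < t)) :=
          funext fun u => decide_eq_decide.mpr (hkey t (by omega) u)
        have e2 : (fun u => decide ((π u : ℕ) < t + 1)) =
            (fun u => decide ((π' u : ℕ) < t + 1)) :=
          funext fun u => decide_eq_decide.mpr (hkey (t + 1) (by omega) u)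
        rw [e1, e2]
      have hA2 : AA g π (w' + 1) = AA g π w' +
          (if g (fun u => decide ((π u : ℕ) < w')) ≠
              g (fun u => decide ((π u : ℕ) < w' + 1)) then 1 else 0) := by
        unfold AA
        rw [Finset.range_add_one, Finset.filter_insert]
        split_ifs with h
        · rw [Finset.card_insert_of_notMem (by simp)]
        · simp
      refine ⟨π, ?_, ?_⟩
      · rw [hcard]; exact hclaim2
      · rw [hcard, heq, hA2, hchainw', hchainw, hA1]
        exact Nat.add_le_add_right hA' _

end

/-- A Boolean function `g : {0,1}^n → {0,1}` has alternation at most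
`k` (along every maximal chain from `0^n` to `1^n`, here parametrized by
permutations `π` of the coordinates, the value of `g` changes at most `k` times)
iff there exist `k` monotone functions `g_1, …, g_k` with
`g(x) = g(0^n) ⊕ g_1(x) ⊕ ⋯ ⊕ g_k(x)` for all `x` (xor computed in `F_2`). -/
theorem stmt11 (n k : ℕ) (g : (Fin n → Bool) → Bool) :
    (∀ π : Equiv.Perm (Fin n),
      ((Finset.range n).filter (fun j =>
          g (fun v => decide ((π v : ℕ) < j)) ≠
          g (fun v => decide ((π v : ℕ) < j + 1)))).card ≤ k) ↔
    (∃ gs : Fin k → (Fin n → Bool) → Bool,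
      (∀ i, ∀ x y : Fin n → Bool, (∀ v, x v = true → y v = true) →
        gs i x = true → gs i y = true) ∧
      (∀ x, (if g x then (1 : ZMod 2) else 0) =
        (if g (fun _ => false) then (1 : ZMod 2) else 0) +
          ∑ i, (if gs i x then (1 : ZMod 2) else 0))) := by
  constructor
  · intro H
    have hbound : ∀ x, altF g x ≤ k := by
      intro x
      obtain ⟨π, -, hA⟩ := chain_exists g (supp x).card x le_rfl
      refine hA.trans (le_trans ?_ (H π))
      unfold AA
      apply Finset.card_le_card
      apply Finset.filter_subset_filter
      apply Finset.range_subset_range.mpr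
      have := Finset.card_le_card (Finset.subset_univ (supp x))
      simpa using this
    refine ⟨fun i x => decide ((i : ℕ) < altF g x), ?_, ?_⟩
    · intro i x y hxy hx
      rw [decide_eq_true_eq] at hx ⊢
      exact lt_of_lt_of_le hx (altF_mono g (supp y).card x y le_rfl hxy)
    · intro x
      have hsum : ∑ i : Fin k, (if (decide ((i : ℕ) < altF g x)) = true then (1 : ZMod 2) else 0)
          = (altF g x : ZMod 2) := by
        simp only [decide_eq_true_eq]
        rw [Fin.sum_univ_eq_sum_range (fun i => if i < altF g x then (1 : ZMod 2) else 0) k]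
        rw [Finset.sum_boole]
        have hf : (Finset.range k).filter (fun i => i < altF g x) = Finset.range (altF g x) := by
          have hb := hbound x
          ext i
          simp only [Finset.mem_filter, Finset.mem_range]
          omega
        rw [hf, Finset.card_range]
      rw [hsum]
      have := altF_parity g (supp x).card x le_rfl
      linear_combination -this
  · rintro ⟨gs, hmono, hsum⟩ π
    set c : ℕ → (Fin n → Bool) := fun j v => decide ((π v : ℕ) < j) with hcdef
    show ((Finset.range n).filter (fun j => g (c j) ≠ g (c (j + 1)))).card ≤ k
    set S := (Finset.range n).filter (fun j => g (c j) ≠ g (c (j + 1))) with hSdef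
    have hcc : ∀ j j' : ℕ, j ≤ j' → ∀ v, c j v = true → c j' v = true := by
      intro j j' hjj v hv
      simp only [hcdef, decide_eq_true_eq] at hv ⊢
      omega
    have hex : ∀ j ∈ S, ∃ i : Fin k, gs i (c j) = false ∧ gs i (c (j + 1)) = true := by
      intro j hj
      rw [hSdef, Finset.mem_filter] at hj
      by_contra hcon
      push_neg at hcon
      have hall : ∀ i, gs i (c j) = gs i (c (j + 1)) := by
        intro i
        cases h : gs i (c j) with
        | true => exact (hmono i (c j) (c (j + 1)) (hcc j (j + 1) (by omega)) h).symm
        | false =>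
          cases h' : gs i (c (j + 1)) with
          | true => exact absurd h' (hcon i h)
          | false => rfl
      have h1 := hsum (c j)
      have h2 := hsum (c (j + 1))
      have h3 : ∑ i, (if gs i (c j) then (1 : ZMod 2) else 0) =
          ∑ i, (if gs i (c (j + 1)) then (1 : ZMod 2) else 0) := by
        apply Finset.sum_congr rfl
        intro i _
        rw [hall i]
      have h4 : (if g (c j) then (1 : ZMod 2) else 0) =
          (if g (c (j + 1)) then (1 : ZMod 2) else 0) := by
        rw [h1, h2, h3]
      apply hj.2
      have hb : ∀ a b : Bool, ((if a then (1 : ZMod 2) else 0) = (if b then 1 else 0)) → a = b := by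
        decide
      exact hb _ _ h4
    classical
    have haux : ∀ (j : ℕ) (hj : j ∈ S) (j' : ℕ) (hj' : j' ∈ S), j < j' →
        (hex j hj).choose ≠ (hex j' hj').choose := by
      intro j hj j' hj' hlt heq
      have s1 := (hex j hj).choose_spec
      have s2 := (hex j' hj').choose_spec
      have : gs (hex j hj).choose (c j') = true :=
        hmono _ (c (j + 1)) (c j') (hcc (j + 1) j' (by omega)) s1.2
      rw [heq] at this
      rw [s2.1] at this
      exact Bool.false_ne_true this
    have hcard : S.card ≤ (Finset.range k).card := by
      apply Finset.card_le_card_of_injOn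
        (fun j => if h : j ∈ S then ((hex j h).choose : ℕ) else 0)
      · intro j hj
        rw [Finset.mem_coe] at hj ⊢; simp only [dif_pos hj]
        exact Finset.mem_range.mpr (hex j hj).choose.isLt
      · intro j hj j' hj' hf
        rw [Finset.mem_coe] at hj hj'
        simp only [dif_pos hj, dif_pos hj'] at hf
        by_contra hne
        rcases lt_or_gt_of_ne hne with h | h
        · exact haux j hj j' hj' h (Fin.ext hf)
        · exact haux j' hj' j hj h (Fin.ext hf.symm)
    simpa using hcard
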